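/- Let R be a Dedekind domain. Every finitely generated projective R-module is isomorphic to R^n ⊕ I for some n ≥ 0 and some ideal I of R. -/

import Mathlib

open UniqueFactorizationMonoid

section pieces
variable {R : Type*} [CommRing R] [IsDomain R]

/-- Multiplication by a nonzero element gives a module isomorphism of ideals. -/
noncomputable def auxMulEquiv (x : R) (hx : x ≠ 0) (N : Ideal R) :
    N ≃ₗ[R] (Ideal.span {x} * N : Ideal R) := by
  let f : N →ₗ[R] R := (LinearMap.lsmul R R x) ∘ₗ N.subtype
  have hinj : Function.Injective f := by
    intro a b h
    simp only [f, LinearMap.comp_apply, LinearMap.lsmul_apply, smul_eq_mul] at h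
    exact Subtype.ext (mul_left_cancel₀ hx h)
  have hrange : LinearMap.range f = (Ideal.span {x} * N : Ideal R) := by
    ext y
    simp only [LinearMap.mem_range, Ideal.mem_span_singleton_mul]
    constructor
    · rintro ⟨⟨n, hn⟩, rfl⟩
      exact ⟨n, hn, rfl⟩
    · rintro ⟨z, hz, rfl⟩
      exact ⟨⟨z, hz⟩, rfl⟩
  exact (LinearEquiv.ofInjective f hinj).trans (LinearEquiv.ofEq _ _ hrange)
end pieces

section split
variable {R : Type*} [Ring R] {E F : Type*} [AddCommGroup E] [AddCommGroup F]
  [Module R E] [Module R F]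

/-- A linear map with a section gives a splitting `E ≃ ker f × F`. -/
noncomputable def auxSplit (f : E →ₗ[R] F) (s : F →ₗ[R] E) (h : f ∘ₗ s = LinearMap.id) :
    E ≃ₗ[R] (LinearMap.ker f) × F := by
  have hfs : ∀ y, f (s y) = y := fun y => by
    have := LinearMap.congr_fun h y
    simpa using this
  have hs : Function.Injective s := fun a b hab => by
    rw [← hfs a, ← hfs b, hab]
  let p : Submodule R E := LinearMap.range s
  let π : E →ₗ[R] p := LinearMap.codRestrict p (s ∘ₗ f) (fun m => ⟨f m, rfl⟩)
  have hproj : ∀ x : p, π x = x := by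
    rintro ⟨-, y, rfl⟩
    apply Subtype.ext
    show s (f (s y)) = s y
    rw [hfs y]
  have hcompl : IsCompl p (LinearMap.ker π) := LinearMap.isCompl_of_proj hproj
  have hker : LinearMap.ker π = LinearMap.ker f := by
    ext m
    constructor
    · intro hm
      have h1 : s (f m) = 0 := congrArg Subtype.val (hm : π m = 0)
      have h2 : f (s (f m)) = 0 := by rw [h1]; simp
      rwa [hfs] at h2
    · intro hm
      apply Subtype.ext
      simp only [π, LinearMap.codRestrict_apply, LinearMap.comp_apply]
      show s (f m) = ((0 : p) : E)
      rw [show f m = 0 from hm]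
      simp
  have e1 : (p × (LinearMap.ker f : Submodule R E)) ≃ₗ[R] E := by
    rw [← hker]; exact Submodule.prodEquivOfIsCompl p (LinearMap.ker π) hcompl
  have e2 : F ≃ₗ[R] p := LinearEquiv.ofInjective s hs
  have e3 : (↥p × ↥(LinearMap.ker f)) ≃ₗ[R] (↥(LinearMap.ker f) × ↥p) :=
    LinearEquiv.prodComm R ↥p ↥(LinearMap.ker f)
  have e4 : (↥(LinearMap.ker f) × ↥p) ≃ₗ[R] (↥(LinearMap.ker f) × F) :=
    LinearEquiv.prodCongr (LinearEquiv.refl R ↥(LinearMap.ker f)) e2.symm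
  exact e1.symm.trans (e3.trans e4)

/-- A subsingleton factor can be dropped. -/
def auxDropSubsingleton (N P : Type*) [AddCommGroup N] [AddCommGroup P] [Module R N] [Module R P]
    [Subsingleton N] : (N × P) ≃ₗ[R] P :=
  LinearEquiv.ofLinear (LinearMap.snd R N P) (LinearMap.prod 0 LinearMap.id)
    (LinearMap.ext fun _ => rfl)
    (LinearMap.ext fun _ => Prod.ext (Subsingleton.elim _ _) rfl)
end split

section sec
variable {R : Type*} [CommRing R] [IsDedekindDomain R]
variable {M : Type*} [AddCommGroup M] [Module R M]

/-- A surjection of a module onto a nonzero ideal of a Dedekind domain splits. -/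
theorem auxSection (φ : M →ₗ[R] R) (hne : LinearMap.range φ ≠ ⊥) :
    ∃ σ : (LinearMap.range φ) →ₗ[R] M, φ.rangeRestrict ∘ₗ σ = LinearMap.id := by
  set I₀ : Ideal R := LinearMap.range φ with hI₀
  letI K := FractionRing R
  set I' : FractionalIdeal (nonZeroDivisors R) K := (I₀ : FractionalIdeal (nonZeroDivisors R) K)
    with hI'def
  have hI' : I' ≠ 0 := FractionalIdeal.coeIdeal_ne_zero.mpr hne
  have hone : (1 : K) ∈ (I' : Submodule R K) * ((I'⁻¹ : FractionalIdeal (nonZeroDivisors R) K) :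
      Submodule R K) := by
    have h0 : I' * I'⁻¹ = 1 := mul_inv_cancel₀ hI'
    have h1 : (1 : K) ∈ (I' * I'⁻¹ : FractionalIdeal (nonZeroDivisors R) K) := by
      rw [h0]; exact FractionalIdeal.one_mem_one _
    rw [← FractionalIdeal.mem_coe] at h1
    rwa [FractionalIdeal.coe_mul] at h1
  have main : ∀ z ∈ ((I' : Submodule R K) * ((I'⁻¹ : FractionalIdeal (nonZeroDivisors R) K) :
      Submodule R K)),
      ∃ σ : I₀ →ₗ[R] M, ∀ y : I₀, algebraMap R K (φ (σ y)) = z * algebraMap R K (y : R) := by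
    intro z hz
    refine Submodule.mul_induction_on hz ?_ ?_
    · intro b hb c hc
      rw [FractionalIdeal.mem_coe] at hb hc
      obtain ⟨b₀, hb₀, rfl⟩ := (FractionalIdeal.mem_coeIdeal _).mp hb
      obtain ⟨m₀, hm₀⟩ := hb₀
      have hcy : ∀ y : I₀,
          c * algebraMap R K (y : R) ∈ (1 : FractionalIdeal (nonZeroDivisors R) K) := by
        intro y
        refine (FractionalIdeal.mem_inv_iff hI').mp hc _ ?_
        rw [hI'def, FractionalIdeal.mem_coeIdeal]
        exact ⟨y, y.2, rfl⟩
      let ℓ : I₀ →ₗ[R] K := c • ((Algebra.linearMap R K) ∘ₗ I₀.subtype)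
      have hmem : ∀ y : I₀, ℓ y ∈ LinearMap.range (Algebra.linearMap R K) := by
        intro y
        obtain ⟨x', hx'⟩ := (FractionalIdeal.mem_one_iff _).mp (hcy y)
        exact ⟨x', by simpa [ℓ, smul_eq_mul] using hx'⟩
      let e : R ≃ₗ[R] LinearMap.range (Algebra.linearMap R K) :=
        LinearEquiv.ofInjective _ (IsFractionRing.injective R K)
      let r : I₀ →ₗ[R] R := (e.symm : _ →ₗ[R] R) ∘ₗ LinearMap.codRestrict _ ℓ hmem
      have hr : ∀ y : I₀, algebraMap R K (r y) = c * algebraMap R K (y : R) := by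
        intro y
        have : (e (r y) : K) = ℓ y := by
          simp only [r, LinearMap.comp_apply]
          rw [LinearEquiv.coe_coe, e.apply_symm_apply]
          rfl
        have he : (e (r y) : K) = algebraMap R K (r y) := rfl
        rw [he] at this
        rw [this]
        simp [ℓ, smul_eq_mul]
      refine ⟨(LinearMap.toSpanSingleton R M m₀) ∘ₗ r, fun y => ?_⟩
      have : φ ((LinearMap.toSpanSingleton R M m₀) (r y)) = r y * b₀ := by
        simp [LinearMap.toSpanSingleton_apply, map_smul, hm₀, smul_eq_mul]
      simp only [LinearMap.comp_apply, this]
      rw [map_mul, hr y]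
      ring
    · rintro x y ⟨σ₁, h₁⟩ ⟨σ₂, h₂⟩
      refine ⟨σ₁ + σ₂, fun w => ?_⟩
      simp [h₁ w, h₂ w, add_mul]
  obtain ⟨σ, hσ⟩ := main 1 hone
  refine ⟨σ, ?_⟩
  ext y
  have := hσ y
  rw [one_mul] at this
  exact IsFractionRing.injective R K this
end sec

section cop
variable {R : Type*} [CommRing R] [IsDedekindDomain R]

theorem auxMulInf (A B C : Ideal R) : A * (B ⊓ C) = (A * B) ⊓ (A * C) := by
  rw [← Ideal.lcm_eq_inf, ← Ideal.lcm_eq_inf, lcm_mul_left, normalize_eq]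

/-- Prime avoidance in a Dedekind domain. -/
theorem auxAvoid (A I : Ideal R) (hA : A ≠ ⊥) (hI : I ≠ ⊥) (_hItop : I ≠ ⊤) :
    ∃ a ∈ A, ∀ P : Ideal R, P.IsPrime → I ≤ P → a ∉ A * P := by
  classical
  set s := (normalizedFactors I).toFinset with hs
  have hmem : ∀ P : Ideal R, P.IsPrime → I ≤ P → P ∈ s := fun P hP hIP => by
    rw [hs, Multiset.mem_toFinset]
    exact (Ideal.mem_normalizedFactors_iff hI).mpr ⟨hP, hIP⟩
  have hsprime : ∀ P ∈ s, P.IsPrime := fun P hP =>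
    ((Ideal.mem_normalizedFactors_iff hI).mp (Multiset.mem_toFinset.mp hP)).1
  have hsle : ∀ P ∈ s, I ≤ P := fun P hP =>
    ((Ideal.mem_normalizedFactors_iff hI).mp (Multiset.mem_toFinset.mp hP)).2
  have hsbot : ∀ P ∈ s, P ≠ ⊥ := fun P hP h => hI (le_bot_iff.mp (h ▸ hsle P hP))
  have hsmax : ∀ P ∈ s, P.IsMaximal := fun P hP =>
    Ideal.IsPrime.isMaximal (hsprime P hP) (hsbot P hP)
  have hPr'ne : ∀ P ∈ s, A * (s.erase P).prod id ≠ 0 := by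
    intro P hP h
    rw [mul_eq_zero] at h
    rcases h with h | h
    · exact hA (by rwa [← Submodule.zero_eq_bot])
    · rw [Finset.prod_eq_zero_iff] at h
      obtain ⟨Q, hQ, hQ0⟩ := h
      exact hsbot Q (Finset.mem_of_mem_erase hQ) (by rwa [← Submodule.zero_eq_bot, ← id_eq Q])
  have hstrict : ∀ P ∈ s, ∃ x, x ∈ A * (s.erase P).prod id ∧ x ∉ A * s.prod id := by
    intro P hP
    have hprod : (s.erase P).prod id * P = s.prod id := Finset.prod_erase_mul s id hP
    have hle : A * s.prod id ≤ A * (s.erase P).prod id := by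
      rw [← hprod, ← mul_assoc]
      exact Ideal.mul_le_left
    have hlt : A * s.prod id < A * (s.erase P).prod id := by
      rcases lt_or_eq_of_le hle with h | h
      · exact h
      · exfalso
        have h2 : A * (s.erase P).prod id * P = A * (s.erase P).prod id * 1 := by
          rw [mul_one, mul_assoc, hprod]; exact h
        have hPtop := mul_left_cancel₀ (hPr'ne P hP) h2
        exact (hsprime P hP).ne_top (by rwa [Ideal.one_eq_top] at hPtop)
    obtain ⟨x, hx1, hx2⟩ := SetLike.exists_of_lt hlt
    exact ⟨x, hx1, hx2⟩
  choose f hf1 hf2 using hstrict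
  refine ⟨∑ P ∈ s.attach, f P.1 P.2, ?_, ?_⟩
  · apply Submodule.sum_mem
    intro P _
    exact Ideal.mul_le_left (hf1 P.1 P.2)
  · intro P hPp hIP hmemP
    have hPs := hmem P hPp hIP
    have hrest : ∀ Q : {x // x ∈ s}, Q.1 ≠ P → f Q.1 Q.2 ∈ A * P := by
      intro Q hQP
      have hPdvd : P ∣ (s.erase Q.1).prod id :=
        Finset.dvd_prod_of_mem id (Finset.mem_erase.mpr ⟨fun h => hQP h.symm, hPs⟩)
      exact Ideal.mul_mono_right (Ideal.dvd_iff_le.mp hPdvd) (hf1 Q.1 Q.2)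
    have hsum : (∑ Q ∈ s.attach.erase ⟨P, hPs⟩, f Q.1 Q.2) ∈ A * P := by
      apply Submodule.sum_mem
      intro Q hQ
      exact hrest Q (fun h => (Finset.mem_erase.mp hQ).1 (Subtype.ext h))
    have hfP : f P hPs ∈ A * P := by
      have hsplit : ∑ Q ∈ s.attach, f Q.1 Q.2
          = f P hPs + ∑ Q ∈ s.attach.erase ⟨P, hPs⟩, f Q.1 Q.2 :=
        (Finset.add_sum_erase s.attach _ (Finset.mem_attach s ⟨P, hPs⟩)).symm
      have heq : f P hPs = (∑ Q ∈ s.attach, f Q.1 Q.2)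
          - ∑ Q ∈ s.attach.erase ⟨P, hPs⟩, f Q.1 Q.2 := by
        rw [hsplit]; ring
      rw [heq]
      exact Submodule.sub_mem _ hmemP hsum
    have hcop : (s.erase P).prod id ⊔ P = ⊤ := by
      by_contra hne
      have hPmax := hsmax P hPs
      have heq : P = (s.erase P).prod id ⊔ P := hPmax.eq_of_le hne le_sup_right
      have hPr'le : (s.erase P).prod id ≤ P := le_sup_left.trans heq.ge
      have hPdvd : P ∣ (s.erase P).prod id := Ideal.dvd_iff_le.mpr hPr'le
      have hPprime : Prime P := Ideal.prime_of_isPrime (hsbot P hPs) hPp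
      obtain ⟨Q, hQ, hPQ⟩ := hPprime.exists_mem_finset_dvd hPdvd
      have hQP : Q ≤ P := Ideal.dvd_iff_le.mp hPQ
      have hQmax := hsmax Q (Finset.mem_of_mem_erase hQ)
      exact (Finset.mem_erase.mp hQ).1 (hQmax.eq_of_le hPp.ne_top hQP)
    have hinf : (s.erase P).prod id ⊓ P = (s.erase P).prod id * P := by
      have h3 := Ideal.sup_mul_inf ((s.erase P).prod id) P
      rwa [hcop, Ideal.top_mul] at h3
    have hfinal : f P hPs ∈ A * s.prod id := by
      have h1 : f P hPs ∈ (A * (s.erase P).prod id) ⊓ (A * P) := ⟨hf1 P hPs, hfP⟩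
      have hpe : (s.erase P).prod id * P = s.prod id := Finset.prod_erase_mul s id hPs
      rw [← auxMulInf, hinf, hpe] at h1
      exact h1
    exact hf2 P hPs hfinal

/-- Every ideal class contains a representative coprime to a given nonzero ideal. -/
theorem auxCoprimeRep (I J : Ideal R) (hI : I ≠ ⊥) (hJ : J ≠ ⊥) :
    ∃ C : Ideal R, C ≠ ⊥ ∧ C ⊔ I = ⊤ ∧
      Nonempty ((J : Submodule R R) ≃ₗ[R] (C : Submodule R R)) := by
  by_cases hItop : I = ⊤
  · exact ⟨J, hJ, by simp [hItop], ⟨LinearEquiv.refl _ _⟩⟩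
  obtain ⟨b, hbJ, hb0⟩ := Submodule.exists_mem_ne_zero_of_ne_bot hJ
  have hJb : J ∣ Ideal.span {b} :=
    Ideal.dvd_iff_le.mpr ((Ideal.span_singleton_le_iff_mem _).mpr hbJ)
  obtain ⟨A, hA⟩ := hJb
  have hA0 : A ≠ ⊥ := by
    rintro rfl
    rw [Ideal.mul_bot] at hA
    exact hb0 (by simpa [Ideal.span_singleton_eq_bot] using hA)
  obtain ⟨a, haA, havoid⟩ := auxAvoid A I hA0 hI hItop
  have ha0 : a ≠ 0 := by
    obtain ⟨P, hPmax, hIP⟩ := Ideal.exists_le_maximal I hItop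
    intro h0
    exact havoid P hPmax.isPrime hIP (h0 ▸ (A * P).zero_mem)
  have hAa : A ∣ Ideal.span {a} :=
    Ideal.dvd_iff_le.mpr ((Ideal.span_singleton_le_iff_mem _).mpr haA)
  obtain ⟨C, hC⟩ := hAa
  have hC0 : C ≠ ⊥ := by
    rintro rfl
    rw [Ideal.mul_bot] at hC
    exact ha0 (by simpa [Ideal.span_singleton_eq_bot] using hC)
  have hcop : C ⊔ I = ⊤ := by
    by_contra hne
    obtain ⟨P, hPmax, hP⟩ := Ideal.exists_le_maximal _ hne
    have hCP : C ≤ P := le_trans le_sup_left hP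
    have hIP : I ≤ P := le_trans le_sup_right hP
    refine havoid P hPmax.isPrime hIP ?_
    have hle : Ideal.span {a} ≤ A * P := hC.symm ▸ Ideal.mul_mono_right hCP
    exact hle (Ideal.mem_span_singleton_self a)
  have key : Ideal.span {a} * J = Ideal.span {b} * C := by
    rw [hC, hA]; ring
  exact ⟨C, hC0, hcop,
    ⟨(auxMulEquiv a ha0 J).trans ((LinearEquiv.ofEq _ _ key).trans (auxMulEquiv b hb0 C).symm)⟩⟩

/-- Steinitz-type lemma: a direct sum of two nonzero ideals is `R ⊕ C` for some ideal `C`. -/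
theorem auxSteinitz (I J : Ideal R) (hI : I ≠ ⊥) (hJ : J ≠ ⊥) :
    ∃ C : Ideal R, Nonempty ((↥J × ↥I) ≃ₗ[R] R × ↥C) := by
  obtain ⟨C', hC'0, hcop, ⟨eJC⟩⟩ := auxCoprimeRep I J hI hJ
  let f : (↥C' × ↥I) →ₗ[R] R :=
    (C'.subtype ∘ₗ LinearMap.fst R ↥C' ↥I) + (I.subtype ∘ₗ LinearMap.snd R ↥C' ↥I)
  have hf : ∀ x : ↥C' × ↥I, f x = (x.1 : R) + (x.2 : R) := fun x => rfl
  have h1 : (1 : R) ∈ C' ⊔ I := by rw [hcop]; trivial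
  obtain ⟨c, hc, i, hi, hci⟩ := Submodule.mem_sup.mp h1
  let sct : R →ₗ[R] (↥C' × ↥I) :=
    LinearMap.toSpanSingleton R _ ((⟨c, hc⟩, ⟨i, hi⟩) : ↥C' × ↥I)
  have hsec : f ∘ₗ sct = LinearMap.id := by
    refine LinearMap.ext fun r => ?_
    have : f (sct r) = r * c + r * i := by
      simp [sct, hf, LinearMap.toSpanSingleton_apply, smul_eq_mul]
    rw [LinearMap.comp_apply, this, ← mul_add, hci, mul_one]
    rfl
  have e1 : (↥C' × ↥I) ≃ₗ[R] (LinearMap.ker f) × R := auxSplit f sct hsec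
  have hmem1 : ∀ x : LinearMap.ker f, ((x : ↥C' × ↥I).1 : R) ∈ C' ⊓ I := by
    rintro ⟨⟨x1, x2⟩, hx⟩
    have hx' : (x1 : R) + (x2 : R) = 0 := hx
    refine ⟨x1.2, ?_⟩
    have : (x1 : R) = -(x2 : R) := by linear_combination hx'
    rw [this]
    exact neg_mem x2.2
  let toI : LinearMap.ker f →ₗ[R] ↥(C' ⊓ I) :=
    LinearMap.codRestrict (C' ⊓ I : Ideal R)
      ((C'.subtype ∘ₗ LinearMap.fst R ↥C' ↥I) ∘ₗ (LinearMap.ker f).subtype) hmem1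
  let g0 : ↥(C' ⊓ I) →ₗ[R] (↥C' × ↥I) :=
    LinearMap.prod (Submodule.inclusion inf_le_left) (-(Submodule.inclusion inf_le_right))
  have hg0 : ∀ z, f (g0 z) = 0 := by
    intro z
    have : f (g0 z) = (z : R) + (-(z : R)) := rfl
    rw [this]; ring
  let fromI : ↥(C' ⊓ I) →ₗ[R] LinearMap.ker f :=
    LinearMap.codRestrict _ g0 (fun z => LinearMap.mem_ker.mpr (hg0 z))
  have e2 : LinearMap.ker f ≃ₗ[R] ↥(C' ⊓ I) := by
    refine LinearEquiv.ofLinear toI fromI ?_ ?_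
    · exact LinearMap.ext fun z => Subtype.ext rfl
    · refine LinearMap.ext fun x => Subtype.ext ?_
      refine Prod.ext (Subtype.ext rfl) (Subtype.ext ?_)
      obtain ⟨⟨x1, x2⟩, hx⟩ := x
      have hx' : (x1 : R) + (x2 : R) = 0 := hx
      show -(x1 : R) = (x2 : R)
      linear_combination -hx'
  have hCI : C' ⊓ I = C' * I := by
    have := Ideal.sup_mul_inf C' I
    rwa [hcop, Ideal.top_mul] at this
  have e3 : ↥(C' ⊓ I) ≃ₗ[R] ↥(C' * I : Ideal R) := LinearEquiv.ofEq _ _ hCI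
  refine ⟨C' * I, ⟨?_⟩⟩
  have e0 : (↥J × ↥I) ≃ₗ[R] (↥C' × ↥I) := LinearEquiv.prodCongr eJC (LinearEquiv.refl R ↥I)
  have e4 : ((LinearMap.ker f) × R) ≃ₗ[R] (↥(C' * I : Ideal R) × R) :=
    LinearEquiv.prodCongr (e2.trans e3) (LinearEquiv.refl R R)
  exact ((e0.trans e1).trans e4).trans (LinearEquiv.prodComm R _ _)
end cop

section main
universe u v

/-- Main induction on the rank. -/
theorem auxMain (R : Type u) [CommRing R] [IsDedekindDomain R] (k : ℕ) :
    ∀ (M : Type v) [AddCommGroup M] [Module R M] [Module.Finite R M] [Module.Projective R M],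
      Module.finrank R M < k →
      ∃ (n : ℕ) (I : Ideal R), Nonempty (M ≃ₗ[R] ((Fin n → R) × I)) := by
  induction k with
  | zero =>
    intro M _ _ _ _ h
    exact absurd h (Nat.not_lt_zero _)
  | succ k ih =>
    intro M _ _ _ _ hk
    by_cases hss : Subsingleton M
    · haveI hb : Subsingleton ↥(⊥ : Ideal R) :=
        not_nontrivial_iff_subsingleton.mp (fun hn => (Submodule.nontrivial_iff_ne_bot.mp hn) rfl)
      refine ⟨0, ⊥, ⟨LinearEquiv.ofLinear 0 0 ?_ ?_⟩⟩ <;>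
        exact LinearMap.ext fun x => Subsingleton.elim _ _
    haveI : Nontrivial M := not_subsingleton_iff_nontrivial.mp hss
    -- construct a nonzero functional
    obtain ⟨sM, hsM⟩ := Module.projective_def.mp ‹Module.Projective R M›
    obtain ⟨m, hm⟩ := exists_ne (0 : M)
    have hsm : sM m ≠ 0 := fun h => hm (by
      have h2 := hsM m
      rw [h] at h2
      simpa using h2.symm)
    obtain ⟨j, hj⟩ := Finsupp.ne_iff.mp hsm
    let φ : M →ₗ[R] R := (Finsupp.lapply j) ∘ₗ sM
    have hφm : φ m = sM m j := rfl
    have hφ : LinearMap.range φ ≠ ⊥ := by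
      intro h
      have h2 : φ m ∈ LinearMap.range φ := ⟨m, rfl⟩
      rw [h, Submodule.mem_bot] at h2
      exact hj (by rwa [hφm] at h2)
    -- split M ≃ ker × I₀
    obtain ⟨σ, hσ⟩ := auxSection φ hφ
    have e1 : M ≃ₗ[R] ↥(LinearMap.ker φ.rangeRestrict) × ↥(LinearMap.range φ) :=
      auxSplit φ.rangeRestrict σ hσ
    haveI : IsNoetherian R M := isNoetherian_of_isNoetherianRing_of_finite R M
    haveI hNfin : Module.Finite R ↥(LinearMap.ker φ.rangeRestrict) :=
      Module.Finite.iff_fg.mpr (IsNoetherian.noetherian _)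
    haveI hIfin : Module.Finite R ↥(LinearMap.range φ) :=
      Module.Finite.iff_fg.mpr (IsNoetherian.noetherian _)
    have hρmem : ∀ x : M, ((LinearMap.id - σ ∘ₗ φ.rangeRestrict : M →ₗ[R] M)) x ∈
        LinearMap.ker φ.rangeRestrict := by
      intro x
      have h2 : φ.rangeRestrict (σ (φ.rangeRestrict x)) = φ.rangeRestrict x :=
        LinearMap.congr_fun hσ (φ.rangeRestrict x)
      simp only [LinearMap.mem_ker, LinearMap.sub_apply, LinearMap.id_apply,
        LinearMap.comp_apply, map_sub, h2, sub_self]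
    haveI hNproj : Module.Projective R ↥(LinearMap.ker φ.rangeRestrict) := by
      refine Module.Projective.of_split (LinearMap.ker φ.rangeRestrict).subtype
        (LinearMap.codRestrict _ ((LinearMap.id - σ ∘ₗ φ.rangeRestrict : M →ₗ[R] M)) hρmem) ?_
      refine LinearMap.ext fun x => Subtype.ext ?_
      have hx : φ.rangeRestrict (x : M) = 0 := x.2
      simp [LinearMap.codRestrict_apply, hx]
    -- rank bookkeeping
    haveI : Nontrivial ↥(LinearMap.range φ) := Submodule.nontrivial_iff_ne_bot.mpr hφ
    have hIr : 1 ≤ Module.rank R ↥(LinearMap.range φ) := Cardinal.one_le_iff_pos.mpr rank_pos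
    have hliftEq := e1.lift_rank_eq
    have hprodLe := lift_rank_add_lift_rank_le_rank_prod R
      (↥(LinearMap.ker φ.rangeRestrict)) (↥(LinearMap.range φ))
    have hNI : Module.rank R (↥(LinearMap.ker φ.rangeRestrict) × ↥(LinearMap.range φ))
        < Cardinal.aleph0 := Module.rank_lt_aleph0 R _
    have hNlt : Module.rank R ↥(LinearMap.ker φ.rangeRestrict) < Cardinal.aleph0 :=
      Module.rank_lt_aleph0 R _
    have hIlt : Module.rank R ↥(LinearMap.range φ) < Cardinal.aleph0 :=
      Module.rank_lt_aleph0 R _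
    have hfr : Module.finrank R M = Cardinal.toNat
        (Module.rank R (↥(LinearMap.ker φ.rangeRestrict) × ↥(LinearMap.range φ))) := by
      have := congrArg Cardinal.toNat hliftEq
      rwa [Cardinal.toNat_lift, Cardinal.toNat_lift] at this
    have hfin2 : Module.finrank R ↥(LinearMap.ker φ.rangeRestrict)
        + Cardinal.toNat (Module.rank R ↥(LinearMap.range φ))
        ≤ Cardinal.toNat
          (Module.rank R (↥(LinearMap.ker φ.rangeRestrict) × ↥(LinearMap.range φ))) := by
      have h5 := Cardinal.toNat_le_toNat hprodLe hNI
      rwa [Cardinal.toNat_add (Cardinal.lift_lt_aleph0.mpr hNlt)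
        (Cardinal.lift_lt_aleph0.mpr hIlt), Cardinal.toNat_lift, Cardinal.toNat_lift] at h5
    have hI1 : 1 ≤ Cardinal.toNat (Module.rank R ↥(LinearMap.range φ)) := by
      have := Cardinal.toNat_le_toNat hIr hIlt
      simpa using this
    have hrankN : Module.finrank R ↥(LinearMap.ker φ.rangeRestrict) < Module.finrank R M := by
      rw [hfr]
      omega
    obtain ⟨n, J, ⟨e2⟩⟩ := ih ↥(LinearMap.ker φ.rangeRestrict) (by omega)
    by_cases hJ : J = ⊥
    · subst hJ
      haveI hbs : Subsingleton ↥(⊥ : Ideal R) :=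
        not_nontrivial_iff_subsingleton.mp (fun hn => (Submodule.nontrivial_iff_ne_bot.mp hn) rfl)
      refine ⟨n, LinearMap.range φ, ⟨?_⟩⟩
      have eq2 : (↥(LinearMap.ker φ.rangeRestrict) × ↥(LinearMap.range φ)) ≃ₗ[R]
          (((Fin n → R) × ↥(⊥ : Ideal R)) × ↥(LinearMap.range φ)) :=
        LinearEquiv.prodCongr e2 (LinearEquiv.refl R ↥(LinearMap.range φ))
      have eq3 : (((Fin n → R) × ↥(⊥ : Ideal R)) × ↥(LinearMap.range φ)) ≃ₗ[R]
          ((Fin n → R) × (↥(⊥ : Ideal R) × ↥(LinearMap.range φ))) := LinearEquiv.prodAssoc R _ _ _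
      have eq4 : ((Fin n → R) × (↥(⊥ : Ideal R) × ↥(LinearMap.range φ))) ≃ₗ[R]
          ((Fin n → R) × ↥(LinearMap.range φ)) :=
        LinearEquiv.prodCongr (LinearEquiv.refl R _) (auxDropSubsingleton _ _)
      exact ((e1.trans eq2).trans eq3).trans eq4
    · obtain ⟨C, ⟨e3⟩⟩ := auxSteinitz (LinearMap.range φ) J hφ hJ
      refine ⟨n + 1, C, ⟨?_⟩⟩
      have e5 : (Fin (n + 1) → R) ≃ₗ[R] ((Fin n → R) × R) :=
        (LinearEquiv.funCongrLeft R R finSumFinEquiv).trans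
          ((LinearEquiv.sumArrowLequivProdArrow _ _ R R).trans
            (LinearEquiv.prodCongr (LinearEquiv.refl R _) (LinearEquiv.funUnique (Fin 1) R R)))
      have eq2 : (↥(LinearMap.ker φ.rangeRestrict) × ↥(LinearMap.range φ)) ≃ₗ[R]
          (((Fin n → R) × ↥J) × ↥(LinearMap.range φ)) :=
        LinearEquiv.prodCongr e2 (LinearEquiv.refl R ↥(LinearMap.range φ))
      have eq3 : (((Fin n → R) × ↥J) × ↥(LinearMap.range φ)) ≃ₗ[R]
          ((Fin n → R) × (↥J × ↥(LinearMap.range φ))) := LinearEquiv.prodAssoc R _ _ _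
      have eq4 : ((Fin n → R) × (↥J × ↥(LinearMap.range φ))) ≃ₗ[R]
          ((Fin n → R) × (R × ↥C)) := LinearEquiv.prodCongr (LinearEquiv.refl R _) e3
      have eq5 : ((Fin n → R) × (R × ↥C)) ≃ₗ[R] (((Fin n → R) × R) × ↥C) :=
        (LinearEquiv.prodAssoc R _ _ _).symm
      have eq6 : (((Fin n → R) × R) × ↥C) ≃ₗ[R] ((Fin (n + 1) → R) × ↥C) :=
        LinearEquiv.prodCongr e5.symm (LinearEquiv.refl R ↥C)
      exact (((((e1.trans eq2).trans eq3).trans eq4).trans eq5).trans eq6)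
end main

/-- Every finitely generated projective module over a Dedekind domain is isomorphic to
`R^n ⊕ I` for some `n ≥ 0` and some ideal `I` of `R`. -/
theorem stmt_2 (R : Type*) [CommRing R] [IsDedekindDomain R]
    (M : Type*) [AddCommGroup M] [Module R M]
    [Module.Finite R M] [Module.Projective R M] :
    ∃ (n : ℕ) (I : Ideal R), Nonempty (M ≃ₗ[R] ((Fin n → R) × I)) :=
  auxMain R (Module.finrank R M + 1) M (Nat.lt_succ_self _)
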